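/- Let F = [[A, B], [C, D]] be a real 2d×2d symplectic matrix and Θ a complex symmetric d×d matrix with positive definite real part. Then the 2d×d complex matrix [B; D] (the last d columns of F) has trivial kernel after multiplication on the left by [[Im Θ, I], [Re Θ, 0]]; that is, if v ∈ ℂ^d satisfies (Im Θ) B v + D v = 0 and (Re Θ) B v = 0, then v = 0. -/
import Mathlib


open Matrix

/-- The standard symplectic matrix `J = [[0, I], [-I, 0]]`. -/
noncomputable def symplJ (d : ℕ) : Matrix (Fin d ⊕ Fin d) (Fin d ⊕ Fin d) ℝ :=
  Matrix.fromBlocks 0 1 (-1) 0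

/-- The real part of a complex matrix. -/
def matRe {d : ℕ} (Θ : Matrix (Fin d) (Fin d) ℂ) : Matrix (Fin d) (Fin d) ℝ :=
  Matrix.of fun i j => (Θ i j).re

/-- The imaginary part of a complex matrix. -/
def matIm {d : ℕ} (Θ : Matrix (Fin d) (Fin d) ℂ) : Matrix (Fin d) (Fin d) ℝ :=
  Matrix.of fun i j => (Θ i j).im


lemma mapC_mul {d : ℕ} (M N : Matrix (Fin d) (Fin d) ℝ) :
    (M * N).map Complex.ofReal = M.map Complex.ofReal * N.map Complex.ofReal := by
  ext i j
  simp [Matrix.mul_apply]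

lemma mapC_det {d : ℕ} (M : Matrix (Fin d) (Fin d) ℝ) :
    (M.map Complex.ofReal).det = (M.det : ℂ) :=
  (RingHom.map_det Complex.ofRealHom M).symm

lemma mapC_neg {d : ℕ} (M : Matrix (Fin d) (Fin d) ℝ) :
    (-M).map Complex.ofReal = -(M.map Complex.ofReal) := by
  ext i j; simp

lemma mapC_one {d : ℕ} : (1 : Matrix (Fin d) (Fin d) ℝ).map Complex.ofReal = 1 :=
  Matrix.map_one _ Complex.ofReal_zero Complex.ofReal_one

theorem trivial_kernel_aux {d : ℕ} (A B C D : Matrix (Fin d) (Fin d) ℝ)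
    (Θ : Matrix (Fin d) (Fin d) ℂ)
    (hsymp : (Matrix.fromBlocks A B C D)ᵀ * Matrix.fromBlocks 0 1 (-1) 0 * Matrix.fromBlocks A B C D = Matrix.fromBlocks 0 1 (-1) 0)
    (hΘre : (Matrix.of fun i j => (Θ i j).re).PosDef)
    (v : Fin d → ℂ)
    (h1 : (((Matrix.of fun i j => (Θ i j).im) : Matrix (Fin d) (Fin d) ℝ).map Complex.ofReal).mulVec ((B.map Complex.ofReal).mulVec v)
        + (D.map Complex.ofReal).mulVec v = 0)
    (h2 : (((Matrix.of fun i j => (Θ i j).re) : Matrix (Fin d) (Fin d) ℝ).map Complex.ofReal).mulVec ((B.map Complex.ofReal).mulVec v) = 0) :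
    v = 0 := by
  set R : Matrix (Fin d) (Fin d) ℝ := Matrix.of fun i j => (Θ i j).re
  have hdet : R.det ≠ 0 := hΘre.det_pos.ne'
  have hdetC : (R.map Complex.ofReal).det ≠ 0 := by
    rw [mapC_det]; exact_mod_cast hdet
  have hBv : (B.map Complex.ofReal).mulVec v = 0 := by
    have := congrArg ((R.map Complex.ofReal)⁻¹.mulVec) h2
    rwa [Matrix.mulVec_mulVec, Matrix.nonsing_inv_mul _ (isUnit_iff_ne_zero.mpr hdetC),
      Matrix.one_mulVec, Matrix.mulVec_zero] at this
  have hDv : (D.map Complex.ofReal).mulVec v = 0 := by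
    rw [hBv, Matrix.mulVec_zero, zero_add] at h1
    exact h1
  simp [Matrix.fromBlocks_transpose, Matrix.fromBlocks_multiply] at hsymp
  have key : -(Cᵀ * B) + Aᵀ * D = 1 := hsymp.2.1
  have keyC : -(Cᵀ.map Complex.ofReal * B.map Complex.ofReal)
      + Aᵀ.map Complex.ofReal * D.map Complex.ofReal = 1 := by
    rw [← mapC_mul, ← mapC_mul, ← mapC_neg, ← Matrix.map_add, key, mapC_one]
    exact fun a b => Complex.ofReal_add a b
  calc v = (-(Cᵀ.map Complex.ofReal * B.map Complex.ofReal)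
      + Aᵀ.map Complex.ofReal * D.map Complex.ofReal).mulVec v := by
        rw [keyC, Matrix.one_mulVec]
    _ = 0 := by
        rw [Matrix.add_mulVec, Matrix.neg_mulVec,
          ← Matrix.mulVec_mulVec, ← Matrix.mulVec_mulVec, hBv, hDv,
          Matrix.mulVec_zero, Matrix.mulVec_zero, neg_zero, add_zero]

/-- For `F = [[A,B],[C,D]]` real symplectic and `Θ` complex symmetric with
positive definite real part: if `v ∈ ℂ^d` satisfies `(Im Θ) B v + D v = 0` and
`(Re Θ) B v = 0`, then `v = 0`. -/
theorem trivial_kernel {d : ℕ} (A B C D : Matrix (Fin d) (Fin d) ℝ)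
    (Θ : Matrix (Fin d) (Fin d) ℂ)
    (hsymp : (Matrix.fromBlocks A B C D)ᵀ * symplJ d * Matrix.fromBlocks A B C D = symplJ d)
    (hΘsymm : Θᵀ = Θ)
    (hΘre : (matRe Θ).PosDef)
    (v : Fin d → ℂ)
    (h1 : ((matIm Θ).map Complex.ofReal).mulVec ((B.map Complex.ofReal).mulVec v)
        + (D.map Complex.ofReal).mulVec v = 0)
    (h2 : ((matRe Θ).map Complex.ofReal).mulVec ((B.map Complex.ofReal).mulVec v) = 0) :
    v = 0 := by
  exact trivial_kernel_aux A B C D Θ (by simpa [symplJ] using hsymp) hΘre v h1 h2
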